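/- Let k be a field and H a k-Hopf algebra with comultiplication Δ(h) = Σ h₍₁₎⊗h₍₂₎. Then the canonical Hopf–Galois map β : H⊗H → H⊗H defined by β(g⊗h) = Σ g h₍₁₎ ⊗ h₍₂₎ is a solution of the Hopf equation (β¹²β²³ = β²³β¹³β¹²). -/

import Mathlib

open TensorProduct LinearMap

section HopfEq

variable (k V : Type*) [Field k] [AddCommGroup V] [Module k V]

/-- The flip map `τ : V ⊗ V → V ⊗ V`, `τ(v ⊗ w) = w ⊗ v`. -/
noncomputable def flipMap : V ⊗[k] V →ₗ[k] V ⊗[k] V :=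
  (TensorProduct.comm k V V).toLinearMap

variable {k V}

/-- `R¹² = R ⊗ I` as an endomorphism of `V ⊗ V ⊗ V`. -/
noncomputable def map12 (R : V ⊗[k] V →ₗ[k] V ⊗[k] V) :
    V ⊗[k] (V ⊗[k] V) →ₗ[k] V ⊗[k] (V ⊗[k] V) :=
  (TensorProduct.assoc k V V V).toLinearMap ∘ₗ R.rTensor V ∘ₗ
    (TensorProduct.assoc k V V V).symm.toLinearMap

/-- `R²³ = I ⊗ R` as an endomorphism of `V ⊗ V ⊗ V`. -/
noncomputable def map23 (R : V ⊗[k] V →ₗ[k] V ⊗[k] V) :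
    V ⊗[k] (V ⊗[k] V) →ₗ[k] V ⊗[k] (V ⊗[k] V) :=
  R.lTensor V

/-- `R¹³ = (I ⊗ τ)(R ⊗ I)(I ⊗ τ)` as an endomorphism of `V ⊗ V ⊗ V`. -/
noncomputable def map13 (R : V ⊗[k] V →ₗ[k] V ⊗[k] V) :
    V ⊗[k] (V ⊗[k] V) →ₗ[k] V ⊗[k] (V ⊗[k] V) :=
  (flipMap k V).lTensor V ∘ₗ map12 R ∘ₗ (flipMap k V).lTensor V

/-- `R` is a solution of the Hopf equation: `R¹²R²³ = R²³R¹³R¹²`. -/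
def IsHopfSolution (R : V ⊗[k] V →ₗ[k] V ⊗[k] V) : Prop :=
  map12 R ∘ₗ map23 R = map23 R ∘ₗ map13 R ∘ₗ map12 R

/-- `R` is a solution of the pentagonal equation: `R¹²R¹³R²³ = R²³R¹²`. -/
def IsPentagonSolution (R : V ⊗[k] V →ₗ[k] V ⊗[k] V) : Prop :=
  map12 R ∘ₗ map13 R ∘ₗ map23 R = map23 R ∘ₗ map12 R

end HopfEq

variable (k H : Type*) [Field k] [Ring H] [HopfAlgebra k H]

/-- The canonical Hopf–Galois map `β : H ⊗ H → H ⊗ H`, `β(g ⊗ h) = Σ g h₍₁₎ ⊗ h₍₂₎`. -/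
noncomputable def galoisMap : H ⊗[k] H →ₗ[k] H ⊗[k] H :=
  LinearMap.rTensor H (LinearMap.mul' k H) ∘ₗ
    (TensorProduct.assoc k H H H).symm.toLinearMap ∘ₗ
    LinearMap.lTensor H (Coalgebra.comul (R := k))

variable {k H} in
lemma galoisMap_tmul {ι : Type*} (g h : H) (r : Coalgebra.Repr k h ι) :
    galoisMap k H (g ⊗ₜ[k] h) = ∑ i ∈ r.index, (g * r.left i) ⊗ₜ[k] r.right i := by
  simp only [galoisMap, LinearMap.comp_apply, LinearEquiv.coe_coe, LinearMap.lTensor_tmul,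
    ← r.eq, TensorProduct.tmul_sum, map_sum, TensorProduct.assoc_symm_tmul,
    LinearMap.rTensor_tmul, LinearMap.mul'_apply]

variable {k H} in
lemma galoisMap_tmul_mul {ι κ : Type*} (g a b : H) (ra : Coalgebra.Repr k a ι)
    (rb : Coalgebra.Repr k b κ) :
    galoisMap k H (g ⊗ₜ[k] (a * b)) =
      ∑ i ∈ ra.index, ∑ j ∈ rb.index,
        (g * (ra.left i * rb.left j)) ⊗ₜ[k] (ra.right i * rb.right j) := by
  have h : Coalgebra.comul (R := k) (a * b) =
      ∑ i ∈ ra.index, ∑ j ∈ rb.index,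
        (ra.left i * rb.left j) ⊗ₜ[k] (ra.right i * rb.right j) := by
    rw [Bialgebra.comul_mul, ← ra.eq, ← rb.eq, Finset.sum_mul_sum]
    simp [Algebra.TensorProduct.tmul_mul_tmul]
  simp only [galoisMap, LinearMap.comp_apply, LinearEquiv.coe_coe, LinearMap.lTensor_tmul, h,
    TensorProduct.tmul_sum, map_sum, TensorProduct.assoc_symm_tmul,
    LinearMap.rTensor_tmul, LinearMap.mul'_apply]

open Coalgebra
set_option synthInstance.maxHeartbeats 1000000 in
/-- for a Hopf algebra `H`, the canonical map `β(g ⊗ h) = Σ g h₍₁₎ ⊗ h₍₂₎`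
is a solution of the Hopf equation. -/
theorem galoisMap_isHopfSolution : IsHopfSolution (galoisMap k H) := by
  unfold IsHopfSolution
  ext x y z
  set rz := ℛ k z
  set ry := ℛ k y
  simp only [AlgebraTensorModule.curry_apply, curry_apply, coe_restrictScalars,
    LinearMap.comp_apply]
  -- LHS
  have hL : map12 (galoisMap k H) (map23 (galoisMap k H) (x ⊗ₜ[k] (y ⊗ₜ[k] z))) =
      ∑ i ∈ rz.index, ∑ a ∈ ry.index, ∑ b ∈ (ℛ k (rz.left i)).index,
        (x * (ry.left a * (ℛ k (rz.left i)).left b)) ⊗ₜ[k]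
          ((ry.right a * (ℛ k (rz.left i)).right b) ⊗ₜ[k] rz.right i) := by
    rw [show map23 (galoisMap k H) (x ⊗ₜ[k] (y ⊗ₜ[k] z))
        = x ⊗ₜ[k] (galoisMap k H (y ⊗ₜ[k] z)) from rfl, galoisMap_tmul y z rz]
    simp only [map12, LinearMap.comp_apply, tmul_sum, map_sum, LinearEquiv.coe_coe,
      TensorProduct.assoc_symm_tmul, LinearMap.rTensor_tmul]
    refine Finset.sum_congr rfl fun i _ => ?_
    rw [galoisMap_tmul_mul x y (rz.left i) ry (ℛ k (rz.left i))]
    simp only [sum_tmul, map_sum, TensorProduct.assoc_tmul]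
  have hR : map23 (galoisMap k H) (map13 (galoisMap k H) (map12 (galoisMap k H)
      (x ⊗ₜ[k] (y ⊗ₜ[k] z)))) =
      ∑ a ∈ ry.index, ∑ i ∈ rz.index, ∑ j ∈ (ℛ k (rz.right i)).index,
        (x * ry.left a * rz.left i) ⊗ₜ[k]
          ((ry.right a * (ℛ k (rz.right i)).left j) ⊗ₜ[k] (ℛ k (rz.right i)).right j) := by
    have h12 : map12 (galoisMap k H) (x ⊗ₜ[k] (y ⊗ₜ[k] z))
        = ∑ a ∈ ry.index, (x * ry.left a) ⊗ₜ[k] (ry.right a ⊗ₜ[k] z) := by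
      simp only [map12, LinearMap.comp_apply, LinearEquiv.coe_coe,
        TensorProduct.assoc_symm_tmul, LinearMap.rTensor_tmul, galoisMap_tmul x y ry,
        sum_tmul, map_sum, TensorProduct.assoc_tmul]
    rw [h12, map_sum, map_sum]
    refine Finset.sum_congr rfl fun a _ => ?_
    have h13 : map13 (galoisMap k H) ((x * ry.left a) ⊗ₜ[k] (ry.right a ⊗ₜ[k] z))
        = ∑ i ∈ rz.index, (x * ry.left a * rz.left i) ⊗ₜ[k] (ry.right a ⊗ₜ[k] rz.right i) := by
      simp only [map13, map12, LinearMap.comp_apply, LinearMap.lTensor_tmul, flipMap,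
        LinearEquiv.coe_coe, TensorProduct.comm_tmul, TensorProduct.assoc_symm_tmul,
        LinearMap.rTensor_tmul, galoisMap_tmul (x * ry.left a) z rz,
        sum_tmul, map_sum, TensorProduct.assoc_tmul, tmul_sum]
    rw [h13, map_sum]
    refine Finset.sum_congr rfl fun i _ => ?_
    rw [show map23 (galoisMap k H) ((x * ry.left a * rz.left i) ⊗ₜ[k] (ry.right a ⊗ₜ[k] rz.right i))
        = (x * ry.left a * rz.left i) ⊗ₜ[k]
          (galoisMap k H (ry.right a ⊗ₜ[k] rz.right i)) from rfl,
      galoisMap_tmul (ry.right a) (rz.right i) (ℛ k (rz.right i)), tmul_sum]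
  rw [hL, hR, Finset.sum_comm]
  refine Finset.sum_congr rfl fun a _ => ?_
  have := (Coalgebra.sum_map_tmul_tmul_eq (R := k)
    (LinearMap.mulLeft k (x * ry.left a)) (LinearMap.mulLeft k (ry.right a))
    (LinearMap.id : H →ₗ[k] H) z (repr := rz)
    (a₁ := fun i => ℛ k (rz.left i)) (a₂ := fun i => ℛ k (rz.right i))).symm
  simpa [mul_assoc] using this
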